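/- In the discrete chain-factorized causal model, let a surrogate nuisance collection consist of arbitrary functions p̃ : 𝒳 → ℝ, B̃_k : 𝒳 × 𝒵₁ × ⋯ × 𝒵_{k−1} → ℝ and R̃_k : 𝒳 × 𝒵₁ × ⋯ × 𝒵_{k−1} → ℝ for k = 1, …, K+1; set B̃_{K+2}(x, z_{1:K+1}) := z_{K+1}, ψ̃ := Σ_x q(x)·p̃(x)·B̃_1(x) + E[1{A = a₀}·Y], and let Φ̃ be the expression defining Φ with B_k, R_k, π(a₁∣·), ψ replaced by B̃_k, R̃_k, p̃, ψ̃. Then the second-order von Mises expansion holds exactly: ψ̃ − ψ + E[Φ̃(O)] = Σ_{k=1}^{K+1} Σ_{x, z_{1:k−1}} P(X = x, Z_{1:k−1} = z_{1:k−1}, A = a_{Z_k}) · (R̃_k − R_k)(x, z_{1:k−1}) · (C̃_k − B̃_k)(x, z_{1:k−1}), where C̃_k(x, z_{1:k−1}) := Σ_{z_k} f_k(z_k∣x, z_{1:k−1}, a_{Z_k})·B̃_{k+1}(x, z_{1:k}); in particular the k = K+1 summand equals Σ_{x, z} P(X = x, Z_{1:K} = z, A = a_{Z_{K+1}}) ·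 (R̃_{K+1} − R_{K+1})(x, z) · (μ(x, z) − B̃_{K+1}(x, z)) with μ(x, z) := Σ_y y·f_{K+1}(y∣x, z, a_{Z_{K+1}}). Thus the remainder is a sum of products of nuisance estimation errors. -/

import Mathlib

/-!
Discrete chain-factorized causal model: the observed vector is
`O = (X, A, Z₁, …, Z_K, Y)` with `A` binary (modeled by `Bool`, with `a₁ := !a₀`),
with joint pmf
`p(x,a,z₁,…,z_K,y) = q(x)·π(a∣x)·∏_{k=1}^K f_k(z_k∣x,z_{1:k−1},a)·f_{K+1}(y∣x,z_{1:K},a)`,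
where all kernels are strictly positive pmfs; the outcome takes values in a nonempty
finite set `𝒴 ⊆ ℝ`.
-/

namespace ChainCausal

variable {K : ℕ}

/-- Embedding of the indices `j < k` into `Fin K`, for `k : Fin (K+1)`. -/
def emb (k : Fin (K + 1)) (j : Fin (k : ℕ)) : Fin K :=
  Fin.castLE k.is_le j

/-- The type of prefixes `(z₁, …, z_{(k:ℕ)})`. -/
abbrev PrefAt (Zm : Fin K → Type) (k : Fin (K + 1)) : Type :=
  (j : Fin (k : ℕ)) → Zm (emb k j)

/-- Full mediator vectors `(z₁, …, z_K)`. -/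
abbrev ZVec (Zm : Fin K → Type) : Type := ∀ j : Fin K, Zm j

/-- The prefix type `(z₁, …, z_{k−1})` appearing in the signature of the `k`-th mediator
kernel. -/
abbrev MedPref (Zm : Fin K → Type) (k : Fin K) : Type :=
  (j : Fin (k : ℕ)) → Zm (Fin.castLE k.isLt.le j)

/-- Restriction of a full mediator vector to the prefix below a mediator index. -/
def medTake (Zm : Fin K → Type) (z : ZVec Zm) (k : Fin K) : MedPref Zm k :=
  fun j => z (Fin.castLE k.isLt.le j)

/-- Restriction of a full mediator vector to the prefix below `k : Fin (K+1)`. -/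
def takeAt (Zm : Fin K → Type) (z : ZVec Zm) (k : Fin (K + 1)) : PrefAt Zm k :=
  fun j => z (emb k j)

/-- A discrete chain-factorized causal model: a strictly positive pmf `q` on covariates,
a strictly positive propensity `π(·∣x)` on `{0,1}`, strictly positive mediator kernels
`f_k(·∣x,z_{1:k−1},a)` and a strictly positive outcome kernel `f_{K+1}(·∣x,z_{1:K},a)`. -/
structure Model (K : ℕ) (𝒳 : Type) [Fintype 𝒳] (Zm : Fin K → Type)
    [∀ k, Fintype (Zm k)] (𝒴 : Finset ℝ) : Type where
  q : 𝒳 → ℝ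
  pi : Bool → 𝒳 → ℝ
  f : (k : Fin K) → 𝒳 → MedPref Zm k → Bool → Zm k → ℝ
  fY : 𝒳 → ZVec Zm → Bool → ↥𝒴 → ℝ
  q_pos : ∀ x, 0 < q x
  q_sum : ∑ x, q x = 1
  pi_pos : ∀ a x, 0 < pi a x
  pi_sum : ∀ x, ∑ a, pi a x = 1
  f_pos : ∀ k x h a w, 0 < f k x h a w
  f_sum : ∀ k x h a, ∑ w, f k x h a w = 1
  fY_pos : ∀ x z a y, 0 < fY x z a y
  fY_sum : ∀ x z a, ∑ y, fY x z a y = 1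

variable {𝒳 : Type} [Fintype 𝒳] {Zm : Fin K → Type} [∀ k, Fintype (Zm k)]
  {𝒴 : Finset ℝ}

/-- The joint pmf of `O = (X, A, Z₁, …, Z_K, Y)`. -/
def jointp (M : Model K 𝒳 Zm 𝒴) (x : 𝒳) (a : Bool) (z : ZVec Zm) (y : ↥𝒴) : ℝ :=
  M.q x * M.pi a x * (∏ k, M.f k x (medTake Zm z k) a (z k)) * M.fY x z a y

/-- The `k`-th conditional kernel `f_k(z_k∣x,z_{1:k−1},a)` for `k : Fin (K+1)`
(a mediator kernel if `(k:ℕ) < K`, the outcome kernel if `(k:ℕ) = K`). -/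
def ker (M : Model K 𝒳 Zm 𝒴) (k : Fin (K + 1)) (x : 𝒳) (z : ZVec Zm) (y : ↥𝒴)
    (a : Bool) : ℝ :=
  if h : (k : ℕ) < K then
    M.f ⟨(k : ℕ), h⟩ x (medTake Zm z ⟨(k : ℕ), h⟩) a (z ⟨(k : ℕ), h⟩)
  else M.fY x z a y

/-- The target functional
`ψ := Σ_x q(x)·π(a₁∣x)·Σ_{z,y} y·∏_{k=1}^{K+1} f_k(z_k∣x,z_{1:k−1},a_{Z_k}) + E[1{A = a₀}·Y]`,
where `a₁ = !a₀` and `aZ` are the fixed treatment labels. -/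
def psi (M : Model K 𝒳 Zm 𝒴) (aZ : Fin (K + 1) → Bool) (a0 : Bool) : ℝ :=
  (∑ x, M.q x * M.pi (!a0) x *
      ∑ z : ZVec Zm, ∑ y : ↥𝒴, (y : ℝ) * ∏ k, ker M k x z y (aZ k)) +
    ∑ x, ∑ a, ∑ z : ZVec Zm, ∑ y : ↥𝒴,
      jointp M x a z y * (if a = a0 then (y : ℝ) else 0)

/-- The treatment density ratio `f^r_A(x) := π(a₁∣x)/π(a₀∣x)`. -/
noncomputable def frA (M : Model K 𝒳 Zm 𝒴) (a0 : Bool) (x : 𝒳) : ℝ :=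
  M.pi (!a0) x / M.pi a0 x

/-- Restriction of a prefix of length `(k:ℕ)` to the sub-prefix below `j`. -/
def subPref {Zm : Fin K → Type} (k : Fin (K + 1)) (h : PrefAt Zm k)
    (j : Fin (k : ℕ)) : MedPref Zm (emb k j) :=
  fun i => h (Fin.castLE j.isLt.le i)

/-- The mediator density ratio
`f^r_j(x, z_{1:j}) := f_j(z_j∣x,z_{1:j−1},a_{Z_j}) / f_j(z_j∣x,z_{1:j−1},1−a_{Z_j})`. -/
noncomputable def frMedP (M : Model K 𝒳 Zm 𝒴) (aZ : Fin (K + 1) → Bool) (k : Fin (K + 1))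
    (j : Fin (k : ℕ)) (x : 𝒳) (h : PrefAt Zm k) : ℝ :=
  M.f (emb k j) x (subPref k h j) (aZ (Fin.castSucc (emb k j))) (h j) /
    M.f (emb k j) x (subPref k h j) (!aZ (Fin.castSucc (emb k j))) (h j)

/-- The density-ratio product
`R_k(x,z_{1:k−1}) := (f^r_A(x) if a_{Z_k}=a₀ else 1)·∏_{j<k, a_{Z_j}≠a_{Z_k}} f^r_j(x,z_{1:j})`. -/
noncomputable def RkP (M : Model K 𝒳 Zm 𝒴) (aZ : Fin (K + 1) → Bool) (a0 : Bool)
    (k : Fin (K + 1)) (x : 𝒳) (h : PrefAt Zm k) : ℝ :=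
  (if aZ k = a0 then frA M a0 x else 1) *
    ∏ j : Fin (k : ℕ),
      if aZ (Fin.castSucc (emb k j)) ≠ aZ k then frMedP M aZ k j x h else 1

variable [∀ k, DecidableEq (Zm k)]

/-- The marginal probability `P(X = x, Z_{1:k−1} = h, A = a_{Z_k})`. -/
noncomputable def margP (M : Model K 𝒳 Zm 𝒴) (aZ : Fin (K + 1) → Bool)
    (k : Fin (K + 1)) (x : 𝒳) (h : PrefAt Zm k) : ℝ :=
  ∑ z : ZVec Zm, ∑ y : ↥𝒴,
    jointp M x (aZ k) z y * (if takeAt Zm z k = h then (1 : ℝ) else 0)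

/-- `C̃_k(x, z_{1:k−1}) := Σ_{z_k} f_k(z_k∣x,z_{1:k−1},a_{Z_k})·B̃_{k+1}(x, z_{1:k})`,
where `B̃_{K+2}(x, z_{1:K+1}) := z_{K+1}`. -/
noncomputable def Ck (M : Model K 𝒳 Zm 𝒴) (aZ : Fin (K + 1) → Bool)
    (Btil : (k : Fin (K + 1)) → 𝒳 → PrefAt Zm k → ℝ)
    (k : Fin (K + 1)) (x : 𝒳) (h : PrefAt Zm k) : ℝ :=
  if hk : (k : ℕ) < K then
    ∑ w : Zm ⟨(k : ℕ), hk⟩,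
      M.f ⟨(k : ℕ), hk⟩ x h (aZ k) w *
        Btil ⟨(k : ℕ) + 1, Nat.succ_lt_succ hk⟩ x
          (@Fin.snoc (k : ℕ)
            (fun j => Zm (emb ⟨(k : ℕ) + 1, Nat.succ_lt_succ hk⟩ j)) h w)
  else
    ∑ y : ↥𝒴,
      M.fY x (fun j => h (Fin.cast (le_antisymm (Nat.not_lt.mp hk) k.is_le) j))
        (aZ k) y * (y : ℝ)

/-- `B̃_{k+1}(x, z_{1:k})` as a function of the full tuple, with the convention
`B̃_{K+2}(x, z_{1:K+1}) := z_{K+1}`. -/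
noncomputable def BtilNext (Btil : (k : Fin (K + 1)) → 𝒳 → PrefAt Zm k → ℝ)
    (k : Fin (K + 1)) (x : 𝒳) (z : ZVec Zm) (y : ↥𝒴) : ℝ :=
  if h : (k : ℕ) < K then
    Btil ⟨(k : ℕ) + 1, Nat.succ_lt_succ h⟩ x
      (takeAt Zm z ⟨(k : ℕ) + 1, Nat.succ_lt_succ h⟩)
  else (y : ℝ)

/-- The surrogate functional `ψ̃ := Σ_x q(x)·p̃(x)·B̃_1(x) + E[1{A = a₀}·Y]`. -/
noncomputable def psiTil (M : Model K 𝒳 Zm 𝒴) (a0 : Bool) (ptil : 𝒳 → ℝ)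
    (Btil : (k : Fin (K + 1)) → 𝒳 → PrefAt Zm k → ℝ) : ℝ :=
  (∑ x, M.q x * ptil x * Btil ⟨0, Nat.succ_pos K⟩ x (fun j => j.elim0)) +
    ∑ x, ∑ a, ∑ z : ZVec Zm, ∑ y : ↥𝒴,
      jointp M x a z y * (if a = a0 then (y : ℝ) else 0)

/-- The surrogate influence function `Φ̃`: the expression defining `Φ` with
`B_k, R_k, π(a₁∣·), ψ` replaced by `B̃_k, R̃_k, p̃, ψ̃`. -/
noncomputable def PhiTil (aZ : Fin (K + 1) → Bool) (a0 : Bool)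
    (ptil : 𝒳 → ℝ) (Btil Rtil : (k : Fin (K + 1)) → 𝒳 → PrefAt Zm k → ℝ)
    (psit : ℝ) (x : 𝒳) (a : Bool) (z : ZVec Zm) (y : ↥𝒴) : ℝ :=
  (∑ k : Fin (K + 1),
      (if a = aZ k then (1 : ℝ) else 0) * Rtil k x (takeAt Zm z k) *
        (BtilNext Btil k x z y - Btil k x (takeAt Zm z k))) +
    ((if a = !a0 then (1 : ℝ) else 0) - ptil x) *
      Btil ⟨0, Nat.succ_pos K⟩ x (takeAt Zm z ⟨0, Nat.succ_pos K⟩) +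
    ptil x * Btil ⟨0, Nat.succ_pos K⟩ x (takeAt Zm z ⟨0, Nat.succ_pos K⟩) +
    (if a = a0 then (y : ℝ) else 0) - psit


section Aux

variable (M : Model K 𝒳 Zm 𝒴)

/-- prefix product with per-step treatment assignment -/
def prefProd (c : Fin K → Bool) (k : Fin (K + 1)) (x : 𝒳) (h : PrefAt Zm k) : ℝ :=
  ∏ j : Fin (k : ℕ), M.f (emb k j) x (subPref k h j) (c (emb k j)) (h j)

def snocP (k : Fin K) (h : PrefAt Zm (Fin.castSucc k)) (w : Zm k) : PrefAt Zm k.succ :=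
  Fin.snoc (α := fun j : Fin ((k : ℕ) + 1) => Zm (emb k.succ j)) h w

def truncP (k : Fin K) (h : PrefAt Zm k.succ) : PrefAt Zm (Fin.castSucc k) :=
  fun j => h (Fin.castSucc j)

lemma snocP_castSucc (k : Fin K) (h : PrefAt Zm (Fin.castSucc k)) (w : Zm k)
    (j : Fin ((Fin.castSucc k : Fin (K+1)) : ℕ)) :
    snocP k h w (Fin.castSucc j) = h j :=
  Fin.snoc_castSucc (α := fun j : Fin ((k : ℕ) + 1) => Zm (emb k.succ j)) ..

lemma snocP_last (k : Fin K) (h : PrefAt Zm (Fin.castSucc k)) (w : Zm k) :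
    snocP k h w (Fin.last (k : ℕ)) = w :=
  Fin.snoc_last (α := fun j : Fin ((k : ℕ) + 1) => Zm (emb k.succ j)) ..

lemma truncP_snocP (k : Fin K) (h : PrefAt Zm (Fin.castSucc k)) (w : Zm k) :
    truncP k (snocP k h w) = h := by
  funext j; exact snocP_castSucc k h w j

lemma snocP_truncP (k : Fin K) (h : PrefAt Zm k.succ) :
    snocP k (truncP k h) (h (Fin.last (k : ℕ))) = h :=
  Fin.snoc_init_self (α := fun j : Fin ((k : ℕ) + 1) => Zm (emb k.succ j)) h



lemma subPref_snocP_castSucc (k : Fin K) (h : PrefAt Zm (Fin.castSucc k)) (w : Zm k)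
    (j : Fin ((Fin.castSucc k : Fin (K+1)) : ℕ)) :
    subPref k.succ (snocP k h w) (Fin.castSucc j) = subPref (Fin.castSucc k) h j := by
  funext i
  exact Fin.snoc_castSucc (α := fun j : Fin ((k : ℕ) + 1) => Zm (emb k.succ j))
    (p := h) (x := w) (i := Fin.castLE j.isLt.le i)

lemma subPref_snocP_last (k : Fin K) (h : PrefAt Zm (Fin.castSucc k)) (w : Zm k) :
    subPref k.succ (snocP k h w) (Fin.last (k : ℕ)) = fun i => h i := by
  funext i
  exact Fin.snoc_castSucc (α := fun j : Fin ((k : ℕ) + 1) => Zm (emb k.succ j))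
    (p := h) (x := w) (i := i)

lemma prefProd_snoc (c : Fin K → Bool) (k : Fin K) (x : 𝒳)
    (h : PrefAt Zm (Fin.castSucc k)) (w : Zm k) :
    prefProd M c k.succ x (snocP k h w)
      = prefProd M c (Fin.castSucc k) x h * M.f k x h (c k) w := by
  unfold prefProd
  show (∏ j : Fin ((k : ℕ) + 1),
      M.f (emb k.succ j) x (subPref k.succ (snocP k h w) j) (c (emb k.succ j))
        (snocP k h w j)) = _
  rw [Fin.prod_univ_castSucc]
  congr 1
  · exact Finset.prod_congr rfl fun j _ => by
      rw [show (snocP k h w (Fin.castSucc j)) = h j from snocP_castSucc k h w j,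
        show subPref k.succ (snocP k h w) (Fin.castSucc j) = subPref (Fin.castSucc k) h j
          from subPref_snocP_castSucc k h w j]
      rfl
  · rw [show (snocP k h w (Fin.last (k:ℕ))) = w from snocP_last k h w,
      show subPref k.succ (snocP k h w) (Fin.last (k:ℕ)) = fun i => h i
        from subPref_snocP_last k h w]
    rfl

def snocEquivP (k : Fin K) : (PrefAt Zm (Fin.castSucc k) × Zm k) ≃ PrefAt Zm k.succ where
  toFun p := snocP k p.1 p.2
  invFun h := (truncP k h, h (Fin.last (k : ℕ)))
  left_inv p := by
    refine Prod.ext ?_ ?_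
    · exact truncP_snocP k p.1 p.2
    · exact snocP_last k p.1 p.2
  right_inv h := snocP_truncP k h

lemma sum_snocP (k : Fin K) (F : PrefAt Zm k.succ → ℝ) :
    ∑ h : PrefAt Zm k.succ, F h
      = ∑ h : PrefAt Zm (Fin.castSucc k), ∑ w : Zm k, F (snocP k h w) := by
  rw [← Equiv.sum_comp (snocEquivP k) F, Fintype.sum_prod_type]
  rfl

lemma takeAt_succ (z : ZVec Zm) (k : Fin K) :
    takeAt Zm z k.succ = snocP k (takeAt Zm z (Fin.castSucc k)) (z k) := by
  funext j
  induction j using Fin.lastCases with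
  | last => exact (snocP_last k (takeAt Zm z (Fin.castSucc k)) (z k)).symm
  | cast j => exact (snocP_castSucc k (takeAt Zm z (Fin.castSucc k)) (z k) j).symm

lemma sum_zvec (c : Fin K → Bool) (x : 𝒳) (k : Fin (K + 1)) (φ : PrefAt Zm k → ℝ) :
    ∑ z : ZVec Zm, (∏ j, M.f j x (medTake Zm z j) (c j) (z j)) * φ (takeAt Zm z k)
      = ∑ h : PrefAt Zm k, prefProd M c k x h * φ h := by
  induction k using Fin.reverseInduction with
  | last => rfl
  | cast k ih =>
    calc ∑ z : ZVec Zm, (∏ j, M.f j x (medTake Zm z j) (c j) (z j)) *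
          φ (takeAt Zm z (Fin.castSucc k))
        = ∑ z : ZVec Zm, (∏ j, M.f j x (medTake Zm z j) (c j) (z j)) *
            (fun h => φ (truncP k h)) (takeAt Zm z k.succ) := rfl
      _ = ∑ h : PrefAt Zm k.succ, prefProd M c k.succ x h * φ (truncP k h) :=
          ih (fun h => φ (truncP k h))
      _ = ∑ h : PrefAt Zm (Fin.castSucc k), ∑ w : Zm k,
            prefProd M c k.succ x (snocP k h w) * φ (truncP k (snocP k h w)) :=
          sum_snocP k _
      _ = ∑ h : PrefAt Zm (Fin.castSucc k), prefProd M c (Fin.castSucc k) x h * φ h := by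
          refine Finset.sum_congr rfl fun h _ => ?_
          simp only [truncP_snocP, prefProd_snoc]
          rw [← Finset.sum_mul, ← Finset.mul_sum, M.f_sum k x h (c k), mul_one]


variable (aZ : Fin (K + 1) → Bool) (a0 : Bool)

lemma margP_eq (k : Fin (K + 1)) (x : 𝒳) (h : PrefAt Zm k) :
    margP M aZ k x h
      = M.q x * M.pi (aZ k) x * prefProd M (fun _ => aZ k) k x h := by
  have key := sum_zvec M (fun _ => aZ k) x k (fun h' => if h' = h then (1:ℝ) else 0)
  calc margP M aZ k x h
      = ∑ z : ZVec Zm, ∑ y : ↥𝒴, (M.q x * M.pi (aZ k) x) *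
          (((∏ j, M.f j x (medTake Zm z j) (aZ k) (z j)) *
            (if takeAt Zm z k = h then (1:ℝ) else 0)) * M.fY x z (aZ k) y) := by
        refine Finset.sum_congr rfl fun z _ => Finset.sum_congr rfl fun y _ => ?_
        show jointp M x (aZ k) z y * _ = _
        unfold jointp; ring
    _ = ∑ z : ZVec Zm, (M.q x * M.pi (aZ k) x) *
          ((∏ j, M.f j x (medTake Zm z j) (aZ k) (z j)) *
            (if takeAt Zm z k = h then (1:ℝ) else 0)) := by
        refine Finset.sum_congr rfl fun z _ => ?_
        rw [← Finset.mul_sum, ← Finset.mul_sum, M.fY_sum, mul_one]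
    _ = (M.q x * M.pi (aZ k) x) * ∑ z : ZVec Zm,
          (∏ j, M.f j x (medTake Zm z j) (aZ k) (z j)) *
            (if takeAt Zm z k = h then (1:ℝ) else 0) := by
        rw [Finset.mul_sum]
    _ = (M.q x * M.pi (aZ k) x) * ∑ h' : PrefAt Zm k,
          prefProd M (fun _ => aZ k) k x h' * (if h' = h then (1:ℝ) else 0) := by rw [key]
    _ = M.q x * M.pi (aZ k) x * prefProd M (fun _ => aZ k) k x h := by
        congr 1
        rw [Finset.sum_congr rfl (fun h' _ => mul_ite (h' = h) (prefProd M (fun _ => aZ k) k x h') (1:ℝ) 0)]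
        simp [Finset.sum_ite_eq']

def Gfun (k : Fin (K + 1)) (x : 𝒳) (h : PrefAt Zm k) : ℝ :=
  M.q x * M.pi (!a0) x * prefProd M (fun j => aZ (Fin.castSucc j)) k x h

lemma margP_mul_RkP (k : Fin (K + 1)) (x : 𝒳) (h : PrefAt Zm k) :
    margP M aZ k x h * RkP M aZ a0 k x h = Gfun M aZ a0 k x h := by
  rw [margP_eq]
  have hpi : M.pi (aZ k) x * (if aZ k = a0 then frA M a0 x else 1) = M.pi (!a0) x := by
    unfold frA
    by_cases hc : aZ k = a0
    · rw [if_pos hc, hc, mul_comm, div_mul_cancel₀ _ (M.pi_pos a0 x).ne']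
    · rw [if_neg hc, mul_one]
      cases ha : aZ k <;> cases hb : a0 <;> simp_all
  have hprod : prefProd M (fun _ => aZ k) k x h *
      (∏ j : Fin (k : ℕ),
        if aZ (Fin.castSucc (emb k j)) ≠ aZ k then frMedP M aZ k j x h else 1)
      = prefProd M (fun j => aZ (Fin.castSucc j)) k x h := by
    unfold prefProd
    rw [← Finset.prod_mul_distrib]
    refine Finset.prod_congr rfl fun j _ => ?_
    show M.f (emb k j) x (subPref k h j) (aZ k) (h j) *
        (if aZ (Fin.castSucc (emb k j)) ≠ aZ k then frMedP M aZ k j x h else 1)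
      = M.f (emb k j) x (subPref k h j) (aZ (Fin.castSucc (emb k j))) (h j)
    by_cases hj : aZ (Fin.castSucc (emb k j)) = aZ k
    · rw [if_neg (not_not_intro hj), mul_one, hj]
    · rw [if_pos hj]
      have hk : aZ k = !(aZ (Fin.castSucc (emb k j))) := by
        cases ha : aZ k <;> cases hb : aZ (Fin.castSucc (emb k j)) <;> simp_all
      unfold frMedP
      rw [hk, mul_comm, div_mul_cancel₀ _
        (M.f_pos (emb k j) x (subPref k h j) (!(aZ (Fin.castSucc (emb k j)))) (h j)).ne']
  unfold RkP Gfun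
  calc M.q x * M.pi (aZ k) x * prefProd M (fun _ => aZ k) k x h *
        ((if aZ k = a0 then frA M a0 x else 1) *
          ∏ j : Fin (k : ℕ),
            if aZ (Fin.castSucc (emb k j)) ≠ aZ k then frMedP M aZ k j x h else 1)
      = M.q x * (M.pi (aZ k) x * (if aZ k = a0 then frA M a0 x else 1)) *
          (prefProd M (fun _ => aZ k) k x h *
            ∏ j : Fin (k : ℕ),
              if aZ (Fin.castSucc (emb k j)) ≠ aZ k then frMedP M aZ k j x h else 1) := by
        ring
    _ = M.q x * M.pi (!a0) x * prefProd M (fun j => aZ (Fin.castSucc j)) k x h := by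
        rw [hpi, hprod]

lemma prefProd_zero (c : Fin K → Bool) (x : 𝒳) (h : PrefAt Zm ⟨0, Nat.succ_pos K⟩) :
    prefProd M c ⟨0, Nat.succ_pos K⟩ x h = 1 := by
  unfold prefProd
  exact Finset.prod_of_isEmpty _

lemma BtilNext_last (Bt : (k : Fin (K + 1)) → 𝒳 → PrefAt Zm k → ℝ) (x : 𝒳)
    (z : ZVec Zm) (y : ↥𝒴) : BtilNext Bt (Fin.last K) x z y = (y : ℝ) := by
  unfold BtilNext
  rw [dif_neg (show ¬ ((Fin.last K : ℕ) < K) from lt_irrefl K)]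

lemma BtilNext_castSucc (Bt : (k : Fin (K + 1)) → 𝒳 → PrefAt Zm k → ℝ) (k : Fin K)
    (x : 𝒳) (z : ZVec Zm) (y : ↥𝒴) :
    BtilNext Bt (Fin.castSucc k) x z y = Bt k.succ x (takeAt Zm z k.succ) := by
  unfold BtilNext
  rw [dif_pos (show ((Fin.castSucc k : Fin (K+1)) : ℕ) < K from k.isLt)]
  rfl

lemma Ck_last (Bt : (k : Fin (K + 1)) → 𝒳 → PrefAt Zm k → ℝ) (x : 𝒳)
    (h : PrefAt Zm (Fin.last K)) :
    Ck M aZ Bt (Fin.last K) x h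
      = ∑ y : ↥𝒴, M.fY x h (aZ (Fin.last K)) y * (y : ℝ) := by
  unfold Ck
  rw [dif_neg (show ¬ ((Fin.last K : ℕ) < K) from lt_irrefl K)]
  rfl

lemma Ck_castSucc (Bt : (k : Fin (K + 1)) → 𝒳 → PrefAt Zm k → ℝ) (k : Fin K)
    (x : 𝒳) (h : PrefAt Zm (Fin.castSucc k)) :
    Ck M aZ Bt (Fin.castSucc k) x h
      = ∑ w : Zm k, M.f k x h (aZ (Fin.castSucc k)) w * Bt k.succ x (snocP k h w) := by
  unfold Ck
  rw [dif_pos (show ((Fin.castSucc k : Fin (K+1)) : ℕ) < K from k.isLt)]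
  rfl

lemma prod_ker (x : 𝒳) (z : ZVec Zm) (y : ↥𝒴) :
    ∏ k, ker M k x z y (aZ k)
      = (∏ j : Fin K, M.f j x (medTake Zm z j) (aZ (Fin.castSucc j)) (z j)) *
          M.fY x z (aZ (Fin.last K)) y := by
  rw [Fin.prod_univ_castSucc]
  congr 1
  · refine Finset.prod_congr rfl fun j _ => ?_
    unfold ker
    rw [dif_pos (show ((Fin.castSucc j : Fin (K+1)) : ℕ) < K from j.isLt)]
    rfl
  · unfold ker
    rw [dif_neg (show ¬ ((Fin.last K : ℕ) < K) from lt_irrefl K)]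

lemma sum_bool_pick (b : Bool) (F : Bool → ℝ) :
    ∑ a, (if a = b then F a else 0) = F b := by simp

lemma truncP_takeAt (z : ZVec Zm) (k : Fin K) :
    truncP k (takeAt Zm z k.succ) = takeAt Zm z (Fin.castSucc k) := rfl

lemma stepA (b : Bool) (g : ZVec Zm → ↥𝒴 → ℝ) (x : 𝒳) :
    (∑ a, ∑ z : ZVec Zm, ∑ y : ↥𝒴,
        jointp M x a z y * ((if a = b then (1:ℝ) else 0) * g z y))
      = ∑ z : ZVec Zm, ∑ y : ↥𝒴, jointp M x b z y * g z y := by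
  rw [← sum_bool_pick b
    (fun a => ∑ z : ZVec Zm, ∑ y : ↥𝒴, jointp M x a z y * g z y)]
  refine Finset.sum_congr rfl fun a _ => ?_
  by_cases ha : a = b
  · simp [ha]
  · simp [ha]

lemma ET_cast (Rt Bt : (k : Fin (K + 1)) → 𝒳 → PrefAt Zm k → ℝ) (k : Fin K) :
    (∑ x, ∑ a, ∑ z : ZVec Zm, ∑ y : ↥𝒴, jointp M x a z y *
        ((if a = aZ (Fin.castSucc k) then (1:ℝ) else 0) *
            Rt (Fin.castSucc k) x (takeAt Zm z (Fin.castSucc k)) *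
          (BtilNext Bt (Fin.castSucc k) x z y -
            Bt (Fin.castSucc k) x (takeAt Zm z (Fin.castSucc k)))))
      = ∑ x, ∑ h : PrefAt Zm (Fin.castSucc k),
          margP M aZ (Fin.castSucc k) x h * Rt (Fin.castSucc k) x h *
            (Ck M aZ Bt (Fin.castSucc k) x h - Bt (Fin.castSucc k) x h) := by
  refine Finset.sum_congr rfl fun x _ => ?_
  calc ∑ a, ∑ z : ZVec Zm, ∑ y : ↥𝒴, jointp M x a z y *
        ((if a = aZ (Fin.castSucc k) then (1:ℝ) else 0) *
            Rt (Fin.castSucc k) x (takeAt Zm z (Fin.castSucc k)) *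
          (BtilNext Bt (Fin.castSucc k) x z y -
            Bt (Fin.castSucc k) x (takeAt Zm z (Fin.castSucc k))))
      = ∑ a, ∑ z : ZVec Zm, ∑ y : ↥𝒴, jointp M x a z y *
          ((if a = aZ (Fin.castSucc k) then (1:ℝ) else 0) *
            (Rt (Fin.castSucc k) x (takeAt Zm z (Fin.castSucc k)) *
              (BtilNext Bt (Fin.castSucc k) x z y -
                Bt (Fin.castSucc k) x (takeAt Zm z (Fin.castSucc k))))) := by
        refine Finset.sum_congr rfl fun a _ => Finset.sum_congr rfl fun z _ =>
          Finset.sum_congr rfl fun y _ => by ring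
    _ = ∑ z : ZVec Zm, ∑ y : ↥𝒴, jointp M x (aZ (Fin.castSucc k)) z y *
          (Rt (Fin.castSucc k) x (takeAt Zm z (Fin.castSucc k)) *
            (BtilNext Bt (Fin.castSucc k) x z y -
              Bt (Fin.castSucc k) x (takeAt Zm z (Fin.castSucc k)))) :=
        stepA M (aZ (Fin.castSucc k)) _ x
    _ = ∑ z : ZVec Zm, (M.q x * M.pi (aZ (Fin.castSucc k)) x) *
          ((∏ j, M.f j x (medTake Zm z j) (aZ (Fin.castSucc k)) (z j)) *
            (Rt (Fin.castSucc k) x (truncP k (takeAt Zm z k.succ)) *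
              (Bt k.succ x (takeAt Zm z k.succ) -
                Bt (Fin.castSucc k) x (truncP k (takeAt Zm z k.succ))))) := by
        refine Finset.sum_congr rfl fun z _ => ?_
        calc ∑ y : ↥𝒴, jointp M x (aZ (Fin.castSucc k)) z y *
              (Rt (Fin.castSucc k) x (takeAt Zm z (Fin.castSucc k)) *
                (BtilNext Bt (Fin.castSucc k) x z y -
                  Bt (Fin.castSucc k) x (takeAt Zm z (Fin.castSucc k))))
            = ∑ y : ↥𝒴, (M.q x * M.pi (aZ (Fin.castSucc k)) x *
                ((∏ j, M.f j x (medTake Zm z j) (aZ (Fin.castSucc k)) (z j)) *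
                  (Rt (Fin.castSucc k) x (takeAt Zm z (Fin.castSucc k)) *
                    (Bt k.succ x (takeAt Zm z k.succ) -
                      Bt (Fin.castSucc k) x (takeAt Zm z (Fin.castSucc k)))))) *
                M.fY x z (aZ (Fin.castSucc k)) y :=
              Finset.sum_congr rfl fun y _ => by
                rw [BtilNext_castSucc]; unfold jointp; ring
          _ = M.q x * M.pi (aZ (Fin.castSucc k)) x *
                ((∏ j, M.f j x (medTake Zm z j) (aZ (Fin.castSucc k)) (z j)) *
                  (Rt (Fin.castSucc k) x (takeAt Zm z (Fin.castSucc k)) *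
                    (Bt k.succ x (takeAt Zm z k.succ) -
                      Bt (Fin.castSucc k) x (takeAt Zm z (Fin.castSucc k))))) := by
              rw [← Finset.mul_sum, M.fY_sum, mul_one]
          _ = M.q x * M.pi (aZ (Fin.castSucc k)) x *
                ((∏ j, M.f j x (medTake Zm z j) (aZ (Fin.castSucc k)) (z j)) *
                  (Rt (Fin.castSucc k) x (truncP k (takeAt Zm z k.succ)) *
                    (Bt k.succ x (takeAt Zm z k.succ) -
                      Bt (Fin.castSucc k) x (truncP k (takeAt Zm z k.succ))))) := rfl
    _ = (M.q x * M.pi (aZ (Fin.castSucc k)) x) * ∑ z : ZVec Zm,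
          (∏ j, M.f j x (medTake Zm z j) (aZ (Fin.castSucc k)) (z j)) *
            (fun h' => Rt (Fin.castSucc k) x (truncP k h') *
              (Bt k.succ x h' - Bt (Fin.castSucc k) x (truncP k h')))
              (takeAt Zm z k.succ) := by
        rw [Finset.mul_sum]
    _ = (M.q x * M.pi (aZ (Fin.castSucc k)) x) *
          ∑ h' : PrefAt Zm k.succ,
            prefProd M (fun _ => aZ (Fin.castSucc k)) k.succ x h' *
              (Rt (Fin.castSucc k) x (truncP k h') *
                (Bt k.succ x h' - Bt (Fin.castSucc k) x (truncP k h'))) :=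
        congrArg _ (sum_zvec M (fun _ => aZ (Fin.castSucc k)) x k.succ
          (fun h' => Rt (Fin.castSucc k) x (truncP k h') *
            (Bt k.succ x h' - Bt (Fin.castSucc k) x (truncP k h'))))
    _ = (M.q x * M.pi (aZ (Fin.castSucc k)) x) *
          ∑ h : PrefAt Zm (Fin.castSucc k), ∑ w : Zm k,
            prefProd M (fun _ => aZ (Fin.castSucc k)) k.succ x (snocP k h w) *
              (Rt (Fin.castSucc k) x (truncP k (snocP k h w)) *
                (Bt k.succ x (snocP k h w) -
                  Bt (Fin.castSucc k) x (truncP k (snocP k h w)))) :=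
        congrArg _ (sum_snocP k _)
    _ = (M.q x * M.pi (aZ (Fin.castSucc k)) x) *
          ∑ h : PrefAt Zm (Fin.castSucc k),
            prefProd M (fun _ => aZ (Fin.castSucc k)) (Fin.castSucc k) x h *
              (Rt (Fin.castSucc k) x h *
                (Ck M aZ Bt (Fin.castSucc k) x h - Bt (Fin.castSucc k) x h)) := by
        refine congrArg _ (Finset.sum_congr rfl fun h _ => ?_)
        simp only [truncP_snocP, prefProd_snoc]
        rw [Ck_castSucc]
        calc ∑ w : Zm k,
              prefProd M (fun _ => aZ (Fin.castSucc k)) (Fin.castSucc k) x h *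
                  M.f k x h ((fun _ => aZ (Fin.castSucc k)) k) w *
                (Rt (Fin.castSucc k) x h *
                  (Bt k.succ x (snocP k h w) - Bt (Fin.castSucc k) x h))
            = ∑ w : Zm k,
                ((prefProd M (fun _ => aZ (Fin.castSucc k)) (Fin.castSucc k) x h *
                    Rt (Fin.castSucc k) x h) *
                  (M.f k x h (aZ (Fin.castSucc k)) w * Bt k.succ x (snocP k h w)) -
                  (prefProd M (fun _ => aZ (Fin.castSucc k)) (Fin.castSucc k) x h *
                    Rt (Fin.castSucc k) x h * Bt (Fin.castSucc k) x h) *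
                    M.f k x h (aZ (Fin.castSucc k)) w) :=
              Finset.sum_congr rfl fun w _ => by ring
          _ = _ := by
              rw [Finset.sum_sub_distrib, ← Finset.mul_sum, ← Finset.mul_sum, M.f_sum k x h (aZ (Fin.castSucc k)),
                mul_one]
              ring
    _ = ∑ h : PrefAt Zm (Fin.castSucc k),
          margP M aZ (Fin.castSucc k) x h * Rt (Fin.castSucc k) x h *
            (Ck M aZ Bt (Fin.castSucc k) x h - Bt (Fin.castSucc k) x h) := by
        rw [Finset.mul_sum]
        refine Finset.sum_congr rfl fun h _ => ?_
        rw [margP_eq]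
        ring

lemma ET_last (Rt Bt : (k : Fin (K + 1)) → 𝒳 → PrefAt Zm k → ℝ) :
    (∑ x, ∑ a, ∑ z : ZVec Zm, ∑ y : ↥𝒴, jointp M x a z y *
        ((if a = aZ (Fin.last K) then (1:ℝ) else 0) *
            Rt (Fin.last K) x (takeAt Zm z (Fin.last K)) *
          (BtilNext Bt (Fin.last K) x z y -
            Bt (Fin.last K) x (takeAt Zm z (Fin.last K)))))
      = ∑ x, ∑ h : PrefAt Zm (Fin.last K),
          margP M aZ (Fin.last K) x h * Rt (Fin.last K) x h *
            (Ck M aZ Bt (Fin.last K) x h - Bt (Fin.last K) x h) := by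
  refine Finset.sum_congr rfl fun x _ => ?_
  calc ∑ a, ∑ z : ZVec Zm, ∑ y : ↥𝒴, jointp M x a z y *
        ((if a = aZ (Fin.last K) then (1:ℝ) else 0) *
            Rt (Fin.last K) x (takeAt Zm z (Fin.last K)) *
          (BtilNext Bt (Fin.last K) x z y -
            Bt (Fin.last K) x (takeAt Zm z (Fin.last K))))
      = ∑ a, ∑ z : ZVec Zm, ∑ y : ↥𝒴, jointp M x a z y *
          ((if a = aZ (Fin.last K) then (1:ℝ) else 0) *
            (Rt (Fin.last K) x (takeAt Zm z (Fin.last K)) *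
              (BtilNext Bt (Fin.last K) x z y -
                Bt (Fin.last K) x (takeAt Zm z (Fin.last K))))) := by
        refine Finset.sum_congr rfl fun a _ => Finset.sum_congr rfl fun z _ =>
          Finset.sum_congr rfl fun y _ => by ring
    _ = ∑ z : ZVec Zm, ∑ y : ↥𝒴, jointp M x (aZ (Fin.last K)) z y *
          (Rt (Fin.last K) x (takeAt Zm z (Fin.last K)) *
            (BtilNext Bt (Fin.last K) x z y -
              Bt (Fin.last K) x (takeAt Zm z (Fin.last K)))) :=
        stepA M (aZ (Fin.last K)) _ x
    _ = ∑ z : ZVec Zm, (M.q x * M.pi (aZ (Fin.last K)) x) *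
          ((∏ j, M.f j x (medTake Zm z j) (aZ (Fin.last K)) (z j)) *
            (Rt (Fin.last K) x (takeAt Zm z (Fin.last K)) *
              ((∑ y : ↥𝒴, M.fY x z (aZ (Fin.last K)) y * (y : ℝ)) -
                Bt (Fin.last K) x (takeAt Zm z (Fin.last K))))) := by
        refine Finset.sum_congr rfl fun z _ => ?_
        calc ∑ y : ↥𝒴, jointp M x (aZ (Fin.last K)) z y *
              (Rt (Fin.last K) x (takeAt Zm z (Fin.last K)) *
                (BtilNext Bt (Fin.last K) x z y -
                  Bt (Fin.last K) x (takeAt Zm z (Fin.last K))))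
            = ∑ y : ↥𝒴,
                (((M.q x * M.pi (aZ (Fin.last K)) x *
                    (∏ j, M.f j x (medTake Zm z j) (aZ (Fin.last K)) (z j))) *
                  Rt (Fin.last K) x (takeAt Zm z (Fin.last K))) *
                    (M.fY x z (aZ (Fin.last K)) y * (y : ℝ)) -
                  ((M.q x * M.pi (aZ (Fin.last K)) x *
                    (∏ j, M.f j x (medTake Zm z j) (aZ (Fin.last K)) (z j))) *
                    Rt (Fin.last K) x (takeAt Zm z (Fin.last K)) *
                    Bt (Fin.last K) x (takeAt Zm z (Fin.last K))) *
                    M.fY x z (aZ (Fin.last K)) y) :=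
              Finset.sum_congr rfl fun y _ => by
                rw [BtilNext_last]; unfold jointp; ring
          _ = _ := by
              rw [Finset.sum_sub_distrib, ← Finset.mul_sum, ← Finset.mul_sum,
                M.fY_sum, mul_one]
              ring
    _ = (M.q x * M.pi (aZ (Fin.last K)) x) * ∑ z : ZVec Zm,
          (∏ j, M.f j x (medTake Zm z j) (aZ (Fin.last K)) (z j)) *
            (fun h => Rt (Fin.last K) x h *
              ((∑ y : ↥𝒴, M.fY x h (aZ (Fin.last K)) y * (y : ℝ)) -
                Bt (Fin.last K) x h)) (takeAt Zm z (Fin.last K)) := by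
        rw [Finset.mul_sum]
        exact Finset.sum_congr rfl fun z _ => rfl
    _ = (M.q x * M.pi (aZ (Fin.last K)) x) *
          ∑ h : PrefAt Zm (Fin.last K),
            prefProd M (fun _ => aZ (Fin.last K)) (Fin.last K) x h *
              (Rt (Fin.last K) x h *
                ((∑ y : ↥𝒴, M.fY x h (aZ (Fin.last K)) y * (y : ℝ)) -
                  Bt (Fin.last K) x h)) :=
        congrArg _ (sum_zvec M (fun _ => aZ (Fin.last K)) x (Fin.last K)
          (fun h => Rt (Fin.last K) x h *
            ((∑ y : ↥𝒴, M.fY x h (aZ (Fin.last K)) y * (y : ℝ)) -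
              Bt (Fin.last K) x h)))
    _ = ∑ h : PrefAt Zm (Fin.last K),
          margP M aZ (Fin.last K) x h * Rt (Fin.last K) x h *
            (Ck M aZ Bt (Fin.last K) x h - Bt (Fin.last K) x h) := by
        rw [Finset.mul_sum]
        refine Finset.sum_congr rfl fun h _ => ?_
        rw [margP_eq, Ck_last]
        ring

lemma ET (Rt Bt : (k : Fin (K + 1)) → 𝒳 → PrefAt Zm k → ℝ) (k : Fin (K + 1)) :
    (∑ x, ∑ a, ∑ z : ZVec Zm, ∑ y : ↥𝒴, jointp M x a z y *
        ((if a = aZ k then (1:ℝ) else 0) * Rt k x (takeAt Zm z k) *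
          (BtilNext Bt k x z y - Bt k x (takeAt Zm z k))))
      = ∑ x, ∑ h : PrefAt Zm k,
          margP M aZ k x h * Rt k x h * (Ck M aZ Bt k x h - Bt k x h) := by
  induction k using Fin.lastCases with
  | last => exact ET_last M aZ Rt Bt
  | cast k => exact ET_cast M aZ Rt Bt k

lemma sum_pref_zero (F : PrefAt Zm (⟨0, Nat.succ_pos K⟩ : Fin (K + 1)) → ℝ) :
    ∑ h : PrefAt Zm (⟨0, Nat.succ_pos K⟩ : Fin (K + 1)), F h
      = F (fun j => j.elim0) := by
  letI : Unique (PrefAt Zm (⟨0, Nat.succ_pos K⟩ : Fin (K + 1))) :=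
    ⟨⟨fun j => j.elim0⟩, fun h => funext fun j => j.elim0⟩
  exact Fintype.sum_unique F

lemma zy_total (x : 𝒳) (a : Bool) :
    ∑ z : ZVec Zm, ∑ y : ↥𝒴, jointp M x a z y = M.q x * M.pi a x := by
  calc ∑ z : ZVec Zm, ∑ y : ↥𝒴, jointp M x a z y
      = ∑ z : ZVec Zm, (M.q x * M.pi a x) *
          ((∏ j, M.f j x (medTake Zm z j) a (z j)) *
            (fun _ : PrefAt Zm (⟨0, Nat.succ_pos K⟩ : Fin (K + 1)) => (1:ℝ))
              (takeAt Zm z ⟨0, Nat.succ_pos K⟩)) := by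
        refine Finset.sum_congr rfl fun z _ => ?_
        calc ∑ y : ↥𝒴, jointp M x a z y
            = ∑ y : ↥𝒴, (M.q x * M.pi a x *
                (∏ j, M.f j x (medTake Zm z j) a (z j))) * M.fY x z a y :=
              Finset.sum_congr rfl fun y _ => by unfold jointp; ring
          _ = M.q x * M.pi a x * ((∏ j, M.f j x (medTake Zm z j) a (z j)) * 1) := by
              rw [← Finset.mul_sum, M.fY_sum]; ring
          _ = _ := rfl
    _ = (M.q x * M.pi a x) * ∑ h : PrefAt Zm (⟨0, Nat.succ_pos K⟩ : Fin (K + 1)),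
          prefProd M (fun _ => a) ⟨0, Nat.succ_pos K⟩ x h * 1 := by
        rw [← Finset.mul_sum]
        exact congrArg _ (sum_zvec M (fun _ => a) x ⟨0, Nat.succ_pos K⟩ (fun _ => (1:ℝ)))
    _ = M.q x * M.pi a x := by
        rw [sum_pref_zero, prefProd_zero, mul_one, mul_one]

lemma jointp_total :
    ∑ x, ∑ a, ∑ z : ZVec Zm, ∑ y : ↥𝒴, jointp M x a z y = 1 := by
  calc ∑ x, ∑ a, ∑ z : ZVec Zm, ∑ y : ↥𝒴, jointp M x a z y
      = ∑ x, ∑ a, M.q x * M.pi a x :=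
        Finset.sum_congr rfl fun x _ => Finset.sum_congr rfl fun a _ => zy_total M x a
    _ = ∑ x, M.q x := by
        refine Finset.sum_congr rfl fun x _ => ?_
        rw [← Finset.mul_sum, M.pi_sum, mul_one]
    _ = 1 := M.q_sum

lemma EUV (Bt : (k : Fin (K + 1)) → 𝒳 → PrefAt Zm k → ℝ) :
    (∑ x, ∑ a, ∑ z : ZVec Zm, ∑ y : ↥𝒴, jointp M x a z y *
        ((if a = !a0 then (1:ℝ) else 0) *
          Bt ⟨0, Nat.succ_pos K⟩ x (takeAt Zm z ⟨0, Nat.succ_pos K⟩)))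
      = ∑ x, ∑ h : PrefAt Zm (⟨0, Nat.succ_pos K⟩ : Fin (K + 1)),
          Gfun M aZ a0 ⟨0, Nat.succ_pos K⟩ x h * Bt ⟨0, Nat.succ_pos K⟩ x h := by
  refine Finset.sum_congr rfl fun x _ => ?_
  calc ∑ a, ∑ z : ZVec Zm, ∑ y : ↥𝒴, jointp M x a z y *
        ((if a = !a0 then (1:ℝ) else 0) *
          Bt ⟨0, Nat.succ_pos K⟩ x (takeAt Zm z ⟨0, Nat.succ_pos K⟩))
      = ∑ z : ZVec Zm, ∑ y : ↥𝒴, jointp M x (!a0) z y *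
          Bt ⟨0, Nat.succ_pos K⟩ x (takeAt Zm z ⟨0, Nat.succ_pos K⟩) :=
        stepA M (!a0) _ x
    _ = ∑ z : ZVec Zm, (M.q x * M.pi (!a0) x) *
          ((∏ j, M.f j x (medTake Zm z j) (!a0) (z j)) *
            Bt ⟨0, Nat.succ_pos K⟩ x (takeAt Zm z ⟨0, Nat.succ_pos K⟩)) := by
        refine Finset.sum_congr rfl fun z _ => ?_
        calc ∑ y : ↥𝒴, jointp M x (!a0) z y *
              Bt ⟨0, Nat.succ_pos K⟩ x (takeAt Zm z ⟨0, Nat.succ_pos K⟩)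
            = ∑ y : ↥𝒴, (M.q x * M.pi (!a0) x *
                ((∏ j, M.f j x (medTake Zm z j) (!a0) (z j)) *
                  Bt ⟨0, Nat.succ_pos K⟩ x (takeAt Zm z ⟨0, Nat.succ_pos K⟩))) *
                M.fY x z (!a0) y :=
              Finset.sum_congr rfl fun y _ => by unfold jointp; ring
          _ = _ := by rw [← Finset.mul_sum, M.fY_sum, mul_one]
    _ = (M.q x * M.pi (!a0) x) * ∑ h : PrefAt Zm (⟨0, Nat.succ_pos K⟩ : Fin (K + 1)),
          prefProd M (fun _ => !a0) ⟨0, Nat.succ_pos K⟩ x h *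
            Bt ⟨0, Nat.succ_pos K⟩ x h := by
        rw [← Finset.mul_sum]
        exact congrArg _ (sum_zvec M (fun _ => !a0) x ⟨0, Nat.succ_pos K⟩
          (fun h => Bt ⟨0, Nat.succ_pos K⟩ x h))
    _ = ∑ h : PrefAt Zm (⟨0, Nat.succ_pos K⟩ : Fin (K + 1)),
          Gfun M aZ a0 ⟨0, Nat.succ_pos K⟩ x h * Bt ⟨0, Nat.succ_pos K⟩ x h := by
        rw [Finset.mul_sum]
        refine Finset.sum_congr rfl fun h _ => ?_
        unfold Gfun
        rw [prefProd_zero, prefProd_zero]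
        ring

noncomputable def SB (Bt : (k : Fin (K + 1)) → 𝒳 → PrefAt Zm k → ℝ)
    (k : Fin (K + 1)) : ℝ :=
  ∑ x, ∑ h : PrefAt Zm k, Gfun M aZ a0 k x h * Bt k x h

noncomputable def psi1 : ℝ :=
  ∑ x, M.q x * M.pi (!a0) x *
    ∑ z : ZVec Zm, ∑ y : ↥𝒴, (y : ℝ) * ∏ k, ker M k x z y (aZ k)

noncomputable def Sext (Bt : (k : Fin (K + 1)) → 𝒳 → PrefAt Zm k → ℝ)
    (k : Fin (K + 2)) : ℝ :=
  if hk : (k : ℕ) < K + 1 then SB M aZ a0 Bt ⟨k, hk⟩ else psi1 M aZ a0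

lemma Gfun_snoc (k : Fin K) (x : 𝒳) (h : PrefAt Zm (Fin.castSucc k)) (w : Zm k) :
    Gfun M aZ a0 k.succ x (snocP k h w)
      = Gfun M aZ a0 (Fin.castSucc k) x h * M.f k x h (aZ (Fin.castSucc k)) w := by
  unfold Gfun
  rw [prefProd_snoc]
  ring

lemma EG_cast (Bt : (k : Fin (K + 1)) → 𝒳 → PrefAt Zm k → ℝ) (k : Fin K) :
    (∑ x, ∑ h : PrefAt Zm (Fin.castSucc k),
        Gfun M aZ a0 (Fin.castSucc k) x h * Ck M aZ Bt (Fin.castSucc k) x h)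
      = ∑ x, ∑ h : PrefAt Zm k.succ, Gfun M aZ a0 k.succ x h * Bt k.succ x h := by
  refine Finset.sum_congr rfl fun x _ => ?_
  rw [sum_snocP k (fun h => Gfun M aZ a0 k.succ x h * Bt k.succ x h)]
  refine Finset.sum_congr rfl fun h _ => ?_
  rw [Ck_castSucc, Finset.mul_sum]
  refine Finset.sum_congr rfl fun w _ => ?_
  rw [Gfun_snoc]
  ring

lemma EG_last (Bt : (k : Fin (K + 1)) → 𝒳 → PrefAt Zm k → ℝ) :
    (∑ x, ∑ h : PrefAt Zm (Fin.last K),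
        Gfun M aZ a0 (Fin.last K) x h * Ck M aZ Bt (Fin.last K) x h)
      = psi1 M aZ a0 := by
  refine Finset.sum_congr rfl fun x _ => ?_
  calc ∑ h : PrefAt Zm (Fin.last K),
        Gfun M aZ a0 (Fin.last K) x h * Ck M aZ Bt (Fin.last K) x h
      = ∑ h : PrefAt Zm (Fin.last K), (M.q x * M.pi (!a0) x) *
          (prefProd M (fun j => aZ (Fin.castSucc j)) (Fin.last K) x h *
            (∑ y : ↥𝒴, M.fY x h (aZ (Fin.last K)) y * (y : ℝ))) := by
        refine Finset.sum_congr rfl fun h _ => ?_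
        rw [Ck_last]
        unfold Gfun
        ring
    _ = (M.q x * M.pi (!a0) x) * ∑ h : PrefAt Zm (Fin.last K),
          prefProd M (fun j => aZ (Fin.castSucc j)) (Fin.last K) x h *
            (∑ y : ↥𝒴, M.fY x h (aZ (Fin.last K)) y * (y : ℝ)) := by
        rw [← Finset.mul_sum]
    _ = (M.q x * M.pi (!a0) x) * ∑ z : ZVec Zm,
          (∏ j, M.f j x (medTake Zm z j) (aZ (Fin.castSucc j)) (z j)) *
            (∑ y : ↥𝒴, M.fY x z (aZ (Fin.last K)) y * (y : ℝ)) :=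
        congrArg _ (sum_zvec M (fun j => aZ (Fin.castSucc j)) x (Fin.last K)
          (fun h => ∑ y : ↥𝒴, M.fY x h (aZ (Fin.last K)) y * (y : ℝ))).symm
    _ = M.q x * M.pi (!a0) x *
          ∑ z : ZVec Zm, ∑ y : ↥𝒴, (y : ℝ) * ∏ k, ker M k x z y (aZ k) := by
        refine congrArg _ (Finset.sum_congr rfl fun z _ => ?_)
        calc (∏ j, M.f j x (medTake Zm z j) (aZ (Fin.castSucc j)) (z j)) *
              (∑ y : ↥𝒴, M.fY x z (aZ (Fin.last K)) y * (y : ℝ))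
            = ∑ y : ↥𝒴, (y : ℝ) *
                ((∏ j, M.f j x (medTake Zm z j) (aZ (Fin.castSucc j)) (z j)) *
                  M.fY x z (aZ (Fin.last K)) y) := by
              rw [Finset.mul_sum]
              exact Finset.sum_congr rfl fun y _ => by ring
          _ = ∑ y : ↥𝒴, (y : ℝ) * ∏ k, ker M k x z y (aZ k) :=
              Finset.sum_congr rfl fun y _ => by rw [prod_ker]

lemma Sext_castSucc (Bt : (k : Fin (K + 1)) → 𝒳 → PrefAt Zm k → ℝ) (k : Fin (K + 1)) :
    Sext M aZ a0 Bt (Fin.castSucc k) = SB M aZ a0 Bt k := by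
  unfold Sext
  rw [dif_pos (show ((Fin.castSucc k : Fin (K + 2)) : ℕ) < K + 1 from k.isLt)]
  rfl

lemma EG (Bt : (k : Fin (K + 1)) → 𝒳 → PrefAt Zm k → ℝ) (k : Fin (K + 1)) :
    (∑ x, ∑ h : PrefAt Zm k, Gfun M aZ a0 k x h * Ck M aZ Bt k x h)
      = Sext M aZ a0 Bt k.succ := by
  induction k using Fin.lastCases with
  | last =>
    unfold Sext
    rw [dif_neg (show ¬ (((Fin.last K).succ : Fin (K + 2)) : ℕ) < K + 1 from
      lt_irrefl (K + 1))]
    exact EG_last M aZ a0 Bt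
  | cast k =>
    unfold Sext
    rw [dif_pos (show (((Fin.castSucc k).succ : Fin (K + 2)) : ℕ) < K + 1 from
      Nat.succ_lt_succ k.isLt)]
    exact EG_cast M aZ a0 Bt k

lemma telescope (Bt : (k : Fin (K + 1)) → 𝒳 → PrefAt Zm k → ℝ) :
    ∑ k : Fin (K + 1), (Sext M aZ a0 Bt k.succ - Sext M aZ a0 Bt (Fin.castSucc k))
      = psi1 M aZ a0 - SB M aZ a0 Bt ⟨0, Nat.succ_pos K⟩ := by
  rw [Finset.sum_sub_distrib]
  have h1 := Fin.sum_univ_castSucc (fun k : Fin (K + 2) => Sext M aZ a0 Bt k)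
  have h2 := Fin.sum_univ_succ (fun k : Fin (K + 2) => Sext M aZ a0 Bt k)
  have e1 : Sext M aZ a0 Bt (Fin.last (K + 1)) = psi1 M aZ a0 := by
    unfold Sext
    rw [dif_neg (show ¬ ((Fin.last (K + 1) : ℕ) < K + 1) from lt_irrefl (K + 1))]
  have e2 : Sext M aZ a0 Bt 0 = SB M aZ a0 Bt ⟨0, Nat.succ_pos K⟩ := by
    unfold Sext
    rw [dif_pos (show ((0 : Fin (K + 2)) : ℕ) < K + 1 by simp)]
    exact congrArg (SB M aZ a0 Bt) (by ext; simp)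
  rw [e1] at h1
  rw [e2] at h2
  linarith

lemma sum4_swap (F : Fin (K + 1) → 𝒳 → Bool → ZVec Zm → ↥𝒴 → ℝ) :
    (∑ x, ∑ a, ∑ z : ZVec Zm, ∑ y : ↥𝒴, ∑ k, F k x a z y)
      = ∑ k, ∑ x, ∑ a, ∑ z : ZVec Zm, ∑ y : ↥𝒴, F k x a z y := by
  calc (∑ x, ∑ a, ∑ z : ZVec Zm, ∑ y : ↥𝒴, ∑ k, F k x a z y)
      = ∑ x, ∑ a, ∑ z : ZVec Zm, ∑ k, ∑ y : ↥𝒴, F k x a z y :=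
        Finset.sum_congr rfl fun x _ => Finset.sum_congr rfl fun a _ =>
          Finset.sum_congr rfl fun z _ => Finset.sum_comm
    _ = ∑ x, ∑ a, ∑ k, ∑ z : ZVec Zm, ∑ y : ↥𝒴, F k x a z y :=
        Finset.sum_congr rfl fun x _ => Finset.sum_congr rfl fun a _ =>
          Finset.sum_comm
    _ = ∑ x, ∑ k, ∑ a, ∑ z : ZVec Zm, ∑ y : ↥𝒴, F k x a z y :=
        Finset.sum_congr rfl fun x _ => Finset.sum_comm
    _ = ∑ k, ∑ x, ∑ a, ∑ z : ZVec Zm, ∑ y : ↥𝒴, F k x a z y :=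
        Finset.sum_comm

end Aux
/-- exact second-order von Mises expansion.  For arbitrary surrogate
nuisances `p̃, B̃_k, R̃_k`,
`ψ̃ − ψ + E[Φ̃(O)] = Σ_{k=1}^{K+1} Σ_{x,z_{1:k−1}} P(X=x,Z_{1:k−1}=z_{1:k−1},A=a_{Z_k})
  ·(R̃_k − R_k)(x,z_{1:k−1})·(C̃_k − B̃_k)(x,z_{1:k−1})`,
and in particular the `k = K+1` summand equals the same expression with
`C̃_{K+1}(x,z)` replaced by `μ(x,z) := Σ_y y·f_{K+1}(y∣x,z,a_{Z_{K+1}})`. -/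
theorem statement_3 [Nonempty 𝒳] [∀ k, Nonempty (Zm k)] (h𝒴 : 𝒴.Nonempty)
    (M : Model K 𝒳 Zm 𝒴) (aZ : Fin (K + 1) → Bool) (a0 : Bool)
    (ptil : 𝒳 → ℝ) (Btil Rtil : (k : Fin (K + 1)) → 𝒳 → PrefAt Zm k → ℝ) :
    (psiTil M a0 ptil Btil - psi M aZ a0 +
        ∑ x, ∑ a, ∑ z : ZVec Zm, ∑ y : ↥𝒴,
          jointp M x a z y *
            PhiTil aZ a0 ptil Btil Rtil (psiTil M a0 ptil Btil) x a z y =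
      ∑ k : Fin (K + 1), ∑ x, ∑ h : PrefAt Zm k,
        margP M aZ k x h * (Rtil k x h - RkP M aZ a0 k x h) *
          (Ck M aZ Btil k x h - Btil k x h)) ∧
    ((∑ x, ∑ h : PrefAt Zm (Fin.last K),
        margP M aZ (Fin.last K) x h *
          (Rtil (Fin.last K) x h - RkP M aZ a0 (Fin.last K) x h) *
          (Ck M aZ Btil (Fin.last K) x h - Btil (Fin.last K) x h)) =
      ∑ x, ∑ h : PrefAt Zm (Fin.last K),
        margP M aZ (Fin.last K) x h *
          (Rtil (Fin.last K) x h - RkP M aZ a0 (Fin.last K) x h) *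
          ((∑ y : ↥𝒴, (y : ℝ) * M.fY x h (aZ (Fin.last K)) y) -
            Btil (Fin.last K) x h)) := by
  constructor
  · set psit : ℝ := psiTil M a0 ptil Btil with hpsit
    have hpoint : ∀ (x : 𝒳) (a : Bool) (z : ZVec Zm) (y : ↥𝒴),
        jointp M x a z y * PhiTil aZ a0 ptil Btil Rtil psit x a z y
          = (∑ k, jointp M x a z y *
                ((if a = aZ k then (1:ℝ) else 0) * Rtil k x (takeAt Zm z k) *
                  (BtilNext Btil k x z y - Btil k x (takeAt Zm z k))))
              + jointp M x a z y * ((if a = !a0 then (1:ℝ) else 0) *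
                  Btil ⟨0, Nat.succ_pos K⟩ x (takeAt Zm z ⟨0, Nat.succ_pos K⟩))
              + jointp M x a z y * (if a = a0 then (y : ℝ) else 0)
              - jointp M x a z y * psit := by
      intro x a z y
      rw [← Finset.mul_sum]
      unfold PhiTil
      ring
    have hT : (∑ x, ∑ a, ∑ z : ZVec Zm, ∑ y : ↥𝒴, ∑ k, jointp M x a z y *
          ((if a = aZ k then (1:ℝ) else 0) * Rtil k x (takeAt Zm z k) *
            (BtilNext Btil k x z y - Btil k x (takeAt Zm z k))))
        = ∑ k : Fin (K + 1), ∑ x, ∑ h : PrefAt Zm k,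
            margP M aZ k x h * Rtil k x h * (Ck M aZ Btil k x h - Btil k x h) := by
      rw [sum4_swap]
      exact Finset.sum_congr rfl fun k _ => ET M aZ Rtil Btil k
    have hU : (∑ x, ∑ a, ∑ z : ZVec Zm, ∑ y : ↥𝒴, jointp M x a z y *
          ((if a = !a0 then (1:ℝ) else 0) *
            Btil ⟨0, Nat.succ_pos K⟩ x (takeAt Zm z ⟨0, Nat.succ_pos K⟩)))
        = SB M aZ a0 Btil ⟨0, Nat.succ_pos K⟩ :=
      (EUV M aZ a0 Btil).trans rfl
    have hP : (∑ x, ∑ a, ∑ z : ZVec Zm, ∑ y : ↥𝒴, jointp M x a z y * psit)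
        = psit := by
      have h0 : (∑ x, ∑ a, ∑ z : ZVec Zm, ∑ y : ↥𝒴, jointp M x a z y) * psit
          = ∑ x, ∑ a, ∑ z : ZVec Zm, ∑ y : ↥𝒴, jointp M x a z y * psit := by
        simp only [Finset.sum_mul]
      rw [← h0, jointp_total, one_mul]
    have hsplit : (∑ x, ∑ a, ∑ z : ZVec Zm, ∑ y : ↥𝒴,
          jointp M x a z y * PhiTil aZ a0 ptil Btil Rtil psit x a z y)
        = (∑ k : Fin (K + 1), ∑ x, ∑ h : PrefAt Zm k,
            margP M aZ k x h * Rtil k x h * (Ck M aZ Btil k x h - Btil k x h))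
          + SB M aZ a0 Btil ⟨0, Nat.succ_pos K⟩
          + (∑ x, ∑ a, ∑ z : ZVec Zm, ∑ y : ↥𝒴,
              jointp M x a z y * (if a = a0 then (y : ℝ) else 0))
          - psit := by
      calc (∑ x, ∑ a, ∑ z : ZVec Zm, ∑ y : ↥𝒴,
            jointp M x a z y * PhiTil aZ a0 ptil Btil Rtil psit x a z y)
          = ∑ x, ∑ a, ∑ z : ZVec Zm, ∑ y : ↥𝒴,
              ((∑ k, jointp M x a z y *
                ((if a = aZ k then (1:ℝ) else 0) * Rtil k x (takeAt Zm z k) *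
                  (BtilNext Btil k x z y - Btil k x (takeAt Zm z k))))
              + jointp M x a z y * ((if a = !a0 then (1:ℝ) else 0) *
                  Btil ⟨0, Nat.succ_pos K⟩ x (takeAt Zm z ⟨0, Nat.succ_pos K⟩))
              + jointp M x a z y * (if a = a0 then (y : ℝ) else 0)
              - jointp M x a z y * psit) :=
            Finset.sum_congr rfl fun x _ => Finset.sum_congr rfl fun a _ =>
              Finset.sum_congr rfl fun z _ => Finset.sum_congr rfl fun y _ =>
                hpoint x a z y
        _ = _ := by
            simp only [Finset.sum_add_distrib, Finset.sum_sub_distrib]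
            rw [hT, hU, hP]
    rw [hsplit]
    have hG : (∑ k : Fin (K + 1), ∑ x, ∑ h : PrefAt Zm k,
          Gfun M aZ a0 k x h * (Ck M aZ Btil k x h - Btil k x h))
        = psi1 M aZ a0 - SB M aZ a0 Btil ⟨0, Nat.succ_pos K⟩ := by
      rw [← telescope M aZ a0 Btil]
      refine Finset.sum_congr rfl fun k _ => ?_
      rw [← EG M aZ a0 Btil k, Sext_castSucc M aZ a0 Btil k]
      unfold SB
      rw [← Finset.sum_sub_distrib]
      refine Finset.sum_congr rfl fun x _ => ?_
      rw [← Finset.sum_sub_distrib]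
      refine Finset.sum_congr rfl fun h _ => ?_
      ring
    have hRHS : (∑ k : Fin (K + 1), ∑ x, ∑ h : PrefAt Zm k,
          margP M aZ k x h * (Rtil k x h - RkP M aZ a0 k x h) *
            (Ck M aZ Btil k x h - Btil k x h))
        = (∑ k : Fin (K + 1), ∑ x, ∑ h : PrefAt Zm k,
            margP M aZ k x h * Rtil k x h * (Ck M aZ Btil k x h - Btil k x h))
          - (psi1 M aZ a0 - SB M aZ a0 Btil ⟨0, Nat.succ_pos K⟩) := by
      rw [← hG, ← Finset.sum_sub_distrib]
      refine Finset.sum_congr rfl fun k _ => ?_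
      rw [← Finset.sum_sub_distrib]
      refine Finset.sum_congr rfl fun x _ => ?_
      rw [← Finset.sum_sub_distrib]
      refine Finset.sum_congr rfl fun h _ => ?_
      rw [← margP_mul_RkP M aZ a0 k x h]
      ring
    rw [hRHS]
    have hpsi : psi M aZ a0 = psi1 M aZ a0 +
        (∑ x, ∑ a, ∑ z : ZVec Zm, ∑ y : ↥𝒴,
            jointp M x a z y * (if a = a0 then (y : ℝ) else 0)) := rfl
    rw [hpsi]
    have hpsit : psit = (∑ x, M.q x * ptil x *
        Btil ⟨0, Nat.succ_pos K⟩ x (fun j => j.elim0)) +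
        (∑ x, ∑ a, ∑ z : ZVec Zm, ∑ y : ↥𝒴,
            jointp M x a z y * (if a = a0 then (y : ℝ) else 0)) := rfl
    rw [hpsit]
    ring
  · refine Finset.sum_congr rfl fun x _ => Finset.sum_congr rfl fun h _ => ?_
    rw [Ck_last M aZ Btil x h,
      show (∑ y : ↥𝒴, M.fY x h (aZ (Fin.last K)) y * (y : ℝ))
          = ∑ y : ↥𝒴, (y : ℝ) * M.fY x h (aZ (Fin.last K)) y from
        Finset.sum_congr rfl fun y _ => mul_comm _ _]


end ChainCausal
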